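/- For every constant α ≥ 1, there exists n and a cost function c : 2^{[n]} → ℝ≥0 that is neither α-average decreasing nor α-average min-bounded. Concretely, the function c(∅)=0, c(S) = max_{j ∈ S} √j (for nonempty S) has this property for n large enough: taking S = {2}, T = {2, n} witnesses failure of α-average decreasing when 2α < √n, and T = [n] witnesses failure of α-average min-bounded when α·√n/n < 1. -/

import Mathlib

theorem exists_neither_avg_decreasing_nor_min_bounded :
    ∀ a : ℝ, 1 ≤ a → ∃ (n : ℕ) (c : Finset (Fin n) → ℝ),
      (∀ S : Finset (Fin n),
        c S = if h : S.Nonempty then S.sup' h (fun j => Real.sqrt ((j : ℕ) + 1)) else 0) ∧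
      ¬ (∀ S T : Finset (Fin n), S ⊆ T → S.Nonempty →
          c T / T.card ≤ a * (c S / S.card)) ∧
      ¬ (∀ T : Finset (Fin n), ∀ h : T.Nonempty,
          T.inf' h (fun j => c {j}) ≤ a * (c T / T.card)) := by
  intro a ha
  set m := ⌊(2*a)^2⌋₊ with hm
  have hlt : (2*a)^2 < (m : ℝ) + 1 := Nat.lt_floor_add_one _
  have hm4 : 4 ≤ m := Nat.le_floor (by push_cast; nlinarith)
  have hsq : Real.sqrt ((m : ℝ) + 1) ^ 2 = (m : ℝ) + 1 := by
    rw [Real.sq_sqrt]; positivity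
  have hs2a : 2 * a < Real.sqrt ((m : ℝ) + 1) := by
    nlinarith [Real.sqrt_nonneg ((m : ℝ) + 1)]
  have hspos : 0 < Real.sqrt ((m : ℝ) + 1) := by
    apply Real.sqrt_pos.mpr; positivity
  set c : Finset (Fin (m+1)) → ℝ :=
    fun S => if h : S.Nonempty then S.sup' h (fun j => Real.sqrt ((j : ℕ) + 1)) else 0 with hc
  refine ⟨m + 1, c, fun S => rfl, ?_, ?_⟩
  · intro H
    have hne : (0 : Fin (m+1)) ≠ Fin.last m := by
      simp [Fin.ext_iff, Fin.val_last]; omega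
    have h1 := H {0} {0, Fin.last m} (by intro x hx; simp at hx; simp [hx])
      ⟨0, Finset.mem_singleton_self 0⟩
    have hcS : c {0} = 1 := by
      simp [hc, Finset.sup'_singleton]
    have hcT : c {0, Fin.last m} = Real.sqrt ((m : ℝ) + 1) := by
      simp only [hc]
      rw [dif_pos ⟨0, by simp⟩]
      rw [Finset.sup'_insert, Finset.sup'_singleton]
      simp only [Fin.val_zero, Fin.val_last]
      have h0m : (0:ℝ) ≤ (m:ℝ) := Nat.cast_nonneg _
      rw [sup_eq_right.mpr (by apply Real.sqrt_le_sqrt; push_cast; linarith)]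
      exact Finset.singleton_nonempty _
    have hcard : ({0, Fin.last m} : Finset (Fin (m+1))).card = 2 :=
      Finset.card_pair hne
    rw [hcS, hcT, hcard, Finset.card_singleton] at h1
    norm_num at h1
    nlinarith
  · intro H
    have hune : (Finset.univ : Finset (Fin (m+1))).Nonempty := Finset.univ_nonempty
    have h1 := H Finset.univ hune
    have hinf : Finset.univ.inf' hune (fun j : Fin (m+1) => c {j}) = 1 := by
      apply le_antisymm
      · have := Finset.inf'_le (fun j : Fin (m+1) => c {j}) (Finset.mem_univ 0)
        simpa [hc, Finset.sup'_singleton] using this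
      · apply Finset.le_inf'
        intro j _
        simp only [hc]
        rw [dif_pos (Finset.singleton_nonempty j), Finset.sup'_singleton]
        have hj : (0:ℝ) ≤ ((j : ℕ) : ℝ) := Nat.cast_nonneg _
        nlinarith [Real.sq_sqrt (show (0:ℝ) ≤ ((j:ℕ):ℝ)+1 by positivity),
          Real.sqrt_nonneg (((j:ℕ):ℝ)+1)]
    have hcU : c Finset.univ = Real.sqrt ((m : ℝ) + 1) := by
      simp only [hc]
      rw [dif_pos hune]
      apply le_antisymm
      · apply Finset.sup'_le
        intro j _
        apply Real.sqrt_le_sqrt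
        have : ((j : ℕ) : ℝ) ≤ (m : ℝ) := by
          exact_mod_cast Nat.lt_succ_iff.mp j.isLt
        linarith
      · have := Finset.le_sup' (fun j : Fin (m+1) => Real.sqrt ((j : ℕ) + 1))
          (Finset.mem_univ (Fin.last m))
        simp only [Fin.val_last] at this; exact this
    have hcard : (Finset.univ : Finset (Fin (m+1))).card = m + 1 := by simp
    rw [hinf, hcU, hcard] at h1
    push_cast at h1
    rw [mul_div_assoc', le_div_iff₀ (by positivity)] at h1
    nlinarith
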